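/- Let S and T be subsets of ω₁ such that cl(S) \ S is unbounded in ω₁, S is stationary, and the symmetric difference S Δ T is non-stationary. Then K(S) ≥_T K(T). -/

import Mathlib

open Cardinal Set

universe u v

/-- `C` is cofinal for `P'` in `P`: every element of `P'` lies below some element of `C`. -/
def IsCofinalFor' {P : Type u} [Preorder P] (P' C : Set P) : Prop :=
  ∀ p ∈ P', ∃ c ∈ C, p ≤ c

/-- `φ : P → Q` is a relative Tukey quotient from `(P', P)` to `(Q', Q)`:
it maps every subset of `P` cofinal for `P'` to a subset of `Q` cofinal for `Q'`. -/
def IsRelTukeyQuotient {P : Type u} {Q : Type v} [Preorder P] [Preorder Q]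
    (P' : Set P) (Q' : Set Q) (φ : P → Q) : Prop :=
  ∀ C : Set P, IsCofinalFor' P' C → IsCofinalFor' Q' (φ '' C)

/-- `(P', P) ≥_T (Q', Q)`: there exists a relative Tukey quotient. -/
def RelTukeyGE {P : Type u} {Q : Type v} [Preorder P] [Preorder Q]
    (P' : Set P) (Q' : Set Q) : Prop :=
  ∃ φ : P → Q, IsRelTukeyQuotient P' Q' φ

/-- `P ≥_T Q`: there is a Tukey quotient from `P` to `Q`. -/
def TukeyGE (P : Type u) (Q : Type v) [Preorder P] [Preorder Q] : Prop :=
  RelTukeyGE (Set.univ : Set P) (Set.univ : Set Q)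

/-- `A` is unbounded in `P`: it has no upper bound in `P`. -/
def UnboundedIn {P : Type u} [Preorder P] (A : Set P) : Prop :=
  ¬ ∃ b : P, ∀ a ∈ A, a ≤ b

noncomputable section

/-- `ω₁`: the set of countable ordinals, as the canonical well-order of order type `ω₁`. -/
def O1 : Type := (Cardinal.aleph 1).ord.ToType

noncomputable instance : LinearOrder O1 :=
  inferInstanceAs (LinearOrder (Cardinal.aleph 1).ord.ToType)

/-- `ω₁` carries its order topology. -/
instance : TopologicalSpace O1 := Preorder.topology O1

instance : OrderTopology O1 := ⟨rfl⟩

/-- `K(S)` for `S ⊆ ω₁`: the compact subsets of `S` (equivalently, compact subsets of `ω₁`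
contained in `S`), ordered by inclusion. -/
def KS (S : Set O1) : Type := {K : Set O1 // K ⊆ S ∧ IsCompact K}

instance (S : Set O1) : PartialOrder (KS S) := Subtype.partialOrder _

/-- `A ⊆ ω₁` is bounded in `ω₁`. -/
def BddO1 (A : Set O1) : Prop := ∃ β : O1, ∀ x ∈ A, x ≤ β

/-- `C ⊆ ω₁` is cub: closed in the order topology and unbounded in `ω₁`. -/
def IsCub (C : Set O1) : Prop := IsClosed C ∧ ¬ BddO1 C

/-- `S ⊆ ω₁` is stationary: it meets every cub set. -/
def IsStat (S : Set O1) : Prop := ∀ C : Set O1, IsCub C → (S ∩ C).Nonempty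

namespace S16

instance : WellFoundedLT O1 := inferInstanceAs (WellFoundedLT (Cardinal.aleph 1).ord.ToType)

lemma countable_Iio (x : O1) : (Set.Iio x).Countable := by
  rw [Cardinal.countable_iff_lt_aleph_one]
  exact Cardinal.mk_Iio_ord_toType (x : (Cardinal.aleph 1).ord.ToType)

lemma mkO1 : #O1 = Cardinal.aleph 1 := by
  show #(Cardinal.aleph 1).ord.ToType = _
  rw [Cardinal.mk_toType, Cardinal.card_ord]

instance : Nonempty O1 :=
  Cardinal.mk_ne_zero_iff.mp (by rw [mkO1]; exact (Cardinal.aleph_pos 1).ne')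

lemma countable_Iic (x : O1) : (Set.Iic x).Countable := by
  rw [← Set.Iio_union_right]
  exact (countable_Iio x).union (Set.countable_singleton x)

lemma bdd_of_countable {A : Set O1} (h : A.Countable) : BddO1 A := by
  by_contra hb
  unfold BddO1 at hb; push_neg at hb
  have hcov : (Set.univ : Set O1) ⊆ ⋃ a ∈ A, Iio a := by
    intro y _
    obtain ⟨a, ha, hy⟩ := hb y
    exact mem_biUnion ha (mem_Iio.mpr hy)
  have hc : (Set.univ : Set O1).Countable :=
    Set.Countable.mono hcov (h.biUnion (fun a _ => countable_Iio a))
  have h2 : #O1 < Cardinal.aleph 1 := by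
    rw [← Cardinal.mk_univ]
    exact (Cardinal.countable_iff_lt_aleph_one _).mp hc
  rw [mkO1] at h2; exact lt_irrefl _ h2

lemma noMax (x : O1) : ∃ y, x < y := by
  by_contra h; push_neg at h
  have hc : (Set.univ : Set O1).Countable := (countable_Iic x).mono (fun y _ => h y)
  have h2 : #O1 < Cardinal.aleph 1 := by
    rw [← Cardinal.mk_univ]
    exact (Cardinal.countable_iff_lt_aleph_one _).mp hc
  rw [mkO1] at h2; exact lt_irrefl _ h2

/-- successor -/
def nxt (x : O1) : O1 := wellFounded_lt.min {y | x < y} (noMax x)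

lemma lt_nxt (x : O1) : x < nxt x := wellFounded_lt.min_mem {y | x < y} (noMax x)

lemma lt_nxt_iff {x y : O1} : y < nxt x ↔ y ≤ x := by
  constructor
  · intro h
    by_contra hyx; push_neg at hyx
    exact wellFounded_lt.not_lt_min {y | x < y} hyx h
  · intro h; exact lt_of_le_of_lt h (lt_nxt x)

lemma isOpen_IocO (a b : O1) : IsOpen (Set.Ioc a b) := by
  have : Set.Ioc a b = Set.Ioi a ∩ Set.Iio (nxt b) := by
    ext z; simp [Set.mem_Ioc, Set.mem_Ioi, Set.mem_Iio, lt_nxt_iff]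
  rw [this]; exact isOpen_Ioi.inter isOpen_Iio

lemma isOpen_IicO (b : O1) : IsOpen (Set.Iic b) := by
  have : Set.Iic b = Set.Iio (nxt b) := by
    ext z; simp [Set.mem_Iic, Set.mem_Iio, lt_nxt_iff]
  rw [this]; exact isOpen_Iio

lemma closure_lim {A : Set O1} {x : O1} (h : x ∈ closure A) (hx : x ∉ A) :
    ∀ y, y < x → (A ∩ Set.Ioo y x).Nonempty := by
  intro y hy
  obtain ⟨z, hz1, hz2⟩ := mem_closure_iff.mp h (Set.Ioc y x) (isOpen_IocO y x) ⟨hy, le_rfl⟩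
  exact ⟨z, hz2, hz1.1, lt_of_le_of_ne hz1.2 (fun he => hx (he ▸ hz2))⟩

lemma mem_closure_of_lim {A : Set O1} {x : O1} (hb : ∃ y, y < x)
    (h : ∀ y, y < x → (A ∩ Set.Ioo y x).Nonempty) : x ∈ closure A := by
  rw [mem_closure_iff]
  intro U hU hxU
  obtain ⟨l, hl, hsub⟩ := exists_Ioc_subset_of_mem_nhds (hU.mem_nhds hxU) hb
  obtain ⟨z, hzA, hz1, hz2⟩ := h l hl
  exact ⟨z, hsub ⟨hz1, hz2.le⟩, hzA⟩

lemma mem_of_closed_lim {F : Set O1} {x : O1} (hF : IsClosed F) (hb : ∃ y, y < x)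
    (h : ∀ y, y < x → (F ∩ Set.Ioo y x).Nonempty) : x ∈ F :=
  hF.closure_subset (mem_closure_of_lim hb h)

lemma isClosed_of_limits {F : Set O1}
    (h : ∀ x, (∃ y, y < x) → (∀ y, y < x → (F ∩ Set.Ioo y x).Nonempty) → x ∈ F) :
    IsClosed F := by
  apply isClosed_of_closure_subset
  intro x hx
  by_cases hxF : x ∈ F
  · exact hxF
  by_cases hb : ∃ y, y < x
  · exact h x hb (closure_lim hx hxF)
  · push_neg at hb
    obtain ⟨z, hz1, hz2⟩ := mem_closure_iff.mp hx (Set.Iic x) (isOpen_IicO x) (mem_Iic.mpr le_rfl)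
    have : z = x := le_antisymm hz1 (hb z)
    exact absurd (this ▸ hz2) hxF

lemma isCompact_IicO (b : O1) : IsCompact (Set.Iic b) := by
  refine wellFounded_lt.induction (C := fun b => IsCompact (Set.Iic b)) b ?_
  intro x IH
  apply isCompact_of_finite_subcover
  intro ι U hU hcov
  classical
  obtain ⟨i0, hi0⟩ := mem_iUnion.mp (hcov (mem_Iic.mpr (le_refl x)))
  by_cases hb : ∃ y, y < x
  · obtain ⟨l, hl, hsub⟩ := exists_Ioc_subset_of_mem_nhds ((hU i0).mem_nhds hi0) hb
    obtain ⟨t, ht⟩ := (IH l hl).elim_finite_subcover U hU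
      (fun z hz => hcov (mem_Iic.mpr (le_trans hz hl.le)))
    refine ⟨insert i0 t, fun z hz => ?_⟩
    rcases le_or_gt z l with h | h
    · obtain ⟨i, hit, hzi⟩ := mem_iUnion₂.mp (ht (mem_Iic.mpr h))
      exact mem_iUnion₂.mpr ⟨i, Finset.mem_insert_of_mem hit, hzi⟩
    · exact mem_iUnion₂.mpr ⟨i0, Finset.mem_insert_self _ _, hsub ⟨h, hz⟩⟩
  · push_neg at hb
    refine ⟨{i0}, fun z hz => ?_⟩
    have hzx : z = x := le_antisymm hz (hb z)
    exact mem_iUnion₂.mpr ⟨i0, Finset.mem_singleton_self _, hzx ▸ hi0⟩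

lemma compact_of_closed_bdd {F : Set O1} (hF : IsClosed F) (h : BddO1 F) : IsCompact F := by
  obtain ⟨β, hβ⟩ := h
  exact (isCompact_IicO β).of_isClosed_subset hF (fun x hx => mem_Iic.mpr (hβ x hx))

lemma bdd_of_compact {F : Set O1} (h : IsCompact F) : BddO1 F := by
  obtain ⟨t, ht⟩ := h.elim_finite_subcover (fun x : O1 => Set.Iio (nxt x))
    (fun x => isOpen_Iio) (fun z hz => mem_iUnion.mpr ⟨z, mem_Iio.mpr (lt_nxt z)⟩)
  rcases t.eq_empty_or_nonempty with rfl | hne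
  · refine ⟨Classical.arbitrary O1, fun x hx => ?_⟩
    simpa using ht hx
  · refine ⟨t.max' hne, fun x hx => ?_⟩
    obtain ⟨i, hit, hzi⟩ := mem_iUnion₂.mp (ht hx)
    exact le_trans (lt_nxt_iff.mp hzi) (Finset.le_max' t i hit)

end S16

namespace S16

/-! ### ω-suprema, sequence building, cub sets -/

lemma omegaSup (u : ℕ → O1) (hu : ∀ n, u n < u (n + 1)) :
    ∃ x, (∀ n, u n < x) ∧ (∀ y, y < x → ∃ n, y < u n) := by
  have hbdd : BddO1 (Set.range u) := bdd_of_countable (Set.countable_range u)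
  have hne : {β : O1 | ∀ n, u n ≤ β}.Nonempty := by
    obtain ⟨β, hβ⟩ := hbdd
    exact ⟨β, fun n => hβ _ ⟨n, rfl⟩⟩
  refine ⟨wellFounded_lt.min _ hne, fun n => ?_, fun y hy => ?_⟩
  · exact lt_of_lt_of_le (hu n) (wellFounded_lt.min_mem _ hne (n + 1))
  · by_contra h; push_neg at h
    exact wellFounded_lt.not_lt_min {β : O1 | ∀ n, u n ≤ β} (h : y ∈ {β : O1 | ∀ n, u n ≤ β}) hy

private def seqRec (pick : O1 → O1) (e : ℕ → O1) (z0 : O1) : ℕ → O1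
  | 0 => pick (max z0 (e 0))
  | (n+1) => pick (max (seqRec pick e z0 n) (e (n+1)))

lemma seqBuild {A : Set O1} {t z0 : O1} (hz : z0 < t)
    (ht : ∀ z, z < t → (A ∩ Set.Ioo z t).Nonempty) :
    ∃ u : ℕ → O1, (∀ n, u n ∈ A) ∧ (∀ n, z0 < u n) ∧ (∀ n, u n < t) ∧
      (∀ n, u n < u (n + 1)) ∧ (∀ z, z < t → ∃ n, z < u n) := by
  obtain ⟨e, he⟩ := (countable_Iio t).exists_eq_range ⟨z0, hz⟩
  have hemem : ∀ j, e j < t := fun j => by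
    have : e j ∈ Set.Iio t := he ▸ Set.mem_range_self j
    exact this
  set pick : O1 → O1 := fun z => if h : z < t then (ht z h).choose else z0 with hpick
  have hpickSpec : ∀ z, z < t → pick z ∈ A ∧ z < pick z ∧ pick z < t := by
    intro z h
    have := (ht z h).choose_spec
    rw [hpick]; simp only [dif_pos h]
    exact ⟨this.1, this.2.1, this.2.2⟩
  set u : ℕ → O1 := seqRec pick e z0 with hudef
  have hlt : ∀ n, u n < t := by
    intro n; induction n with
    | zero => exact (hpickSpec _ (max_lt hz (hemem 0))).2.2
    | succ m ih => exact (hpickSpec _ (max_lt ih (hemem (m+1)))).2.2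
  have humem : ∀ n, u n ∈ A := by
    intro n; cases n with
    | zero => exact (hpickSpec _ (max_lt hz (hemem 0))).1
    | succ m => exact (hpickSpec _ (max_lt (hlt m) (hemem (m+1)))).1
  have humono : ∀ n, u n < u (n + 1) := by
    intro n
    have := (hpickSpec _ (max_lt (hlt n) (hemem (n+1)))).2.1
    exact lt_of_le_of_lt (le_max_left _ _) this
  have hz0 : ∀ n, z0 < u n := by
    intro n; induction n with
    | zero => exact lt_of_le_of_lt (le_max_left _ _) (hpickSpec _ (max_lt hz (hemem 0))).2.1
    | succ m ih => exact lt_trans ih (humono m)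
  refine ⟨u, humem, hz0, hlt, humono, fun z hzt => ?_⟩
  have : z ∈ Set.range e := he ▸ (mem_Iio.mpr hzt)
  obtain ⟨j, hj⟩ := this
  cases j with
  | zero =>
    refine ⟨0, lt_of_le_of_lt (hj ▸ le_max_right z0 (e 0)) (hpickSpec _ (max_lt hz (hemem 0))).2.1⟩
  | succ m =>
    refine ⟨m + 1, lt_of_le_of_lt (hj ▸ le_max_right (u m) (e (m+1)))
      (hpickSpec _ (max_lt (hlt m) (hemem (m+1)))).2.1⟩

/-- limit points from below -/
def limO (A : Set O1) : Set O1 :=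
  {x | (∃ y, y < x) ∧ ∀ y, y < x → (A ∩ Set.Ioo y x).Nonempty}

lemma limO_closed (A : Set O1) : IsClosed (limO A) := by
  apply isClosed_of_limits
  intro x hb h
  refine ⟨hb, fun y hy => ?_⟩
  obtain ⟨z, hzl, hz1, hz2⟩ := h y hy
  obtain ⟨w, hwA, hw1, hw2⟩ := hzl.2 y hz1
  exact ⟨w, hwA, hw1, hw2.trans hz2⟩

lemma limO_unbdd {A : Set O1} (hA : ∀ β, ∃ a ∈ A, β < a) (β : O1) :
    ∃ x ∈ limO A, β < x := by
  set pick : O1 → O1 := fun z => (hA z).choose with hpick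
  have hps : ∀ z, pick z ∈ A ∧ z < pick z := fun z => ⟨(hA z).choose_spec.1, (hA z).choose_spec.2⟩
  set u : ℕ → O1 := fun n => Nat.rec (pick β) (fun _ x => pick x) n with hu
  have hu0 : u 0 = pick β := rfl
  have huS : ∀ n, u (n+1) = pick (u n) := fun n => rfl
  have humono : ∀ n, u n < u (n+1) := fun n => by rw [huS]; exact (hps (u n)).2
  have humem : ∀ n, u n ∈ A := by
    intro n; cases n with
    | zero => exact (hps β).1
    | succ m => rw [huS]; exact (hps (u m)).1
  obtain ⟨x, hx1, hx2⟩ := omegaSup u humono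
  refine ⟨x, ⟨⟨u 0, hx1 0⟩, fun y hy => ?_⟩, lt_trans (hps β).2 (hx1 0)⟩
  obtain ⟨n, hn⟩ := hx2 y hy
  exact ⟨u n, humem n, hn, hx1 n⟩

lemma unbdd_iff {A : Set O1} : ¬ BddO1 A ↔ ∀ β, ∃ a ∈ A, β < a := by
  unfold BddO1; push_neg; simp only [not_le]

lemma cub_unbdd_inter {C D : Set O1} (hCcl : IsClosed C) (hC : ∀ β, ∃ a ∈ C, β < a)
    (hDcl : IsClosed D) (hD : ∀ β, ∃ a ∈ D, β < a) (β : O1) :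
    ∃ x ∈ C ∩ D, β < x := by
  set pC : O1 → O1 := fun z => (hC z).choose with hpC
  have hpCs : ∀ z, pC z ∈ C ∧ z < pC z := fun z => ⟨(hC z).choose_spec.1, (hC z).choose_spec.2⟩
  set pD : O1 → O1 := fun z => (hD z).choose with hpD
  have hpDs : ∀ z, pD z ∈ D ∧ z < pD z := fun z => ⟨(hD z).choose_spec.1, (hD z).choose_spec.2⟩
  set w : ℕ → O1 := fun n => Nat.rec (pC β) (fun _ x => pC (pD x)) n with hw
  have hwS : ∀ n, w (n+1) = pC (pD (w n)) := fun n => rfl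
  have hwC : ∀ n, w n ∈ C := by
    intro n; cases n with
    | zero => exact (hpCs β).1
    | succ m => rw [hwS]; exact (hpCs (pD (w m))).1
  have hwmono : ∀ n, w n < w (n+1) := fun n => by
    rw [hwS]; exact lt_trans (hpDs (w n)).2 (hpCs (pD (w n))).2
  obtain ⟨x, hx1, hx2⟩ := omegaSup w hwmono
  have hxb : ∃ y, y < x := ⟨w 0, hx1 0⟩
  have hxC : x ∈ C := mem_of_closed_lim hCcl hxb (fun y hy => by
    obtain ⟨n, hn⟩ := hx2 y hy
    exact ⟨w n, hwC n, hn, hx1 n⟩)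
  have hxD : x ∈ D := mem_of_closed_lim hDcl hxb (fun y hy => by
    obtain ⟨n, hn⟩ := hx2 y hy
    exact ⟨pD (w n), (hpDs (w n)).1, lt_trans hn (hpDs (w n)).2,
      lt_trans (show pD (w n) < w (n+1) by rw [hwS]; exact (hpCs (pD (w n))).2) (hx1 (n+1))⟩)
  exact ⟨x, ⟨hxC, hxD⟩, lt_trans (hpCs β).2 (hx1 0)⟩

end S16

namespace S16

/-! ### blocks determined by a closed unbounded set -/

def blk (C : Set O1) (c : O1) : Set O1 :=
  {x | x ≤ c ∧ ∀ d ∈ C, d < c → d < x}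

open Classical in
noncomputable def cAb (C : Set O1) (x : O1) : O1 :=
  if h : (C ∩ Set.Ici x).Nonempty then wellFounded_lt.min (C ∩ Set.Ici x) h else x

section cAb

variable {C : Set O1}

lemma cAb_mem (hCu : ∀ z : O1, (C ∩ Set.Ici z).Nonempty) (x : O1) : cAb C x ∈ C ∧ x ≤ cAb C x := by
  unfold cAb; rw [dif_pos (hCu x)]
  exact wellFounded_lt.min_mem (C ∩ Set.Ici x) (hCu x)

lemma cAb_min (hCu : ∀ z : O1, (C ∩ Set.Ici z).Nonempty) {x d : O1} (hd : d ∈ C) (hxd : x ≤ d) : cAb C x ≤ d := by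
  unfold cAb; rw [dif_pos (hCu x)]
  by_contra h; push_neg at h
  exact wellFounded_lt.not_lt_min (C ∩ Set.Ici x) (⟨hd, hxd⟩ : d ∈ C ∩ Set.Ici x) h

lemma cAb_mono (hCu : ∀ z : O1, (C ∩ Set.Ici z).Nonempty) {x y : O1} (h : x ≤ y) : cAb C x ≤ cAb C y :=
  cAb_min hCu (cAb_mem hCu y).1 (h.trans (cAb_mem hCu y).2)

lemma cAb_blk (hCu : ∀ z : O1, (C ∩ Set.Ici z).Nonempty) (x : O1) : x ∈ blk C (cAb C x) := by
  refine ⟨(cAb_mem hCu x).2, fun d hd hdc => ?_⟩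
  by_contra hge; push_neg at hge
  exact absurd hdc (not_lt.mpr (cAb_min hCu hd hge))

lemma mem_blk_self (c : O1) : c ∈ blk C c :=
  ⟨le_rfl, fun _ _ h => h⟩

lemma blk_cAb (hCu : ∀ z : O1, (C ∩ Set.Ici z).Nonempty) {c x : O1} (hc : c ∈ C) (hx : x ∈ blk C c) : cAb C x = c := by
  have h1 : cAb C x ≤ c := cAb_min hCu hc hx.1
  rcases lt_or_eq_of_le h1 with h | h
  · exact absurd ((cAb_mem hCu x).2) (not_le.mpr (hx.2 _ (cAb_mem hCu x).1 h))
  · exact h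

lemma cAb_self (hCu : ∀ z : O1, (C ∩ Set.Ici z).Nonempty) {c : O1} (hc : c ∈ C) : cAb C c = c :=
  blk_cAb hCu hc (mem_blk_self c)

lemma blk_C_eq {c d : O1} (hd : d ∈ C) (hdb : d ∈ blk C c) : d = c := by
  rcases lt_or_eq_of_le hdb.1 with h | h
  · exact absurd (hdb.2 d hd h) (lt_irrefl d)
  · exact h

lemma blk_closed (c : O1) : IsClosed (blk C c) := by
  apply isClosed_of_limits
  intro x hb h
  constructor
  · by_contra hxc; push_neg at hxc
    obtain ⟨z, hz, hz1, _⟩ := h c hxc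
    exact absurd hz.1 (not_le.mpr hz1)
  · intro d hd hdc
    obtain ⟨y0, hy0⟩ := hb
    obtain ⟨z, hz, _, hz2⟩ := h y0 hy0
    exact lt_trans (hz.2 d hd hdc) hz2

end cAb

/-! ### the master closedness lemma -/

lemma unionClosed {C : Set O1} (hCcl : IsClosed C) (hCu : ∀ z : O1, (C ∩ Set.Ici z).Nonempty)
    (W F : Set O1) (hW : IsClosed W) (hF : IsClosed F) (hFsub : F ⊆ W ∩ C) (hWF : W ∩ C ⊆ F)
    (I : Set O1) (hI : I ⊆ C) (Q : O1 → Set O1)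
    (hQcl : ∀ c ∈ I, IsClosed (Q c)) (hQblk : ∀ c ∈ I, Q c ⊆ blk C c)
    (hwit : ∀ c ∈ I, ∃ w ∈ W, w ∈ blk C c) :
    IsClosed (F ∪ ⋃ c ∈ I, Q c) := by
  set M := F ∪ ⋃ c ∈ I, Q c with hM
  apply isClosed_of_limits
  intro μ hb hμ
  set cμ := cAb C μ with hcμ
  have hcμC : cμ ∈ C := (cAb_mem hCu μ).1
  have hμcμ : μ ≤ cμ := (cAb_mem hCu μ).2
  by_cases hA : ∃ y, y < μ ∧ ∀ x, x ∈ M → x ∈ Set.Ioo y μ → x ∈ blk C cμ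
  · -- tail inside the block of μ
    obtain ⟨y, hy, htail⟩ := hA
    have hclaim : ∀ x, x ∈ M → x ∈ Set.Ioo y μ → (cμ ∈ I ∧ x ∈ Q cμ) := by
      intro x hxM hxI
      have hxblk : x ∈ blk C cμ := htail x hxM hxI
      rcases hxM with hxF | hxU
      · exfalso
        have hxC : x ∈ C := (hFsub hxF).2
        have : x = cμ := blk_C_eq hxC hxblk
        exact absurd (lt_of_lt_of_le hxI.2 hμcμ) (this ▸ lt_irrefl x)
      · obtain ⟨c', hc'I, hxQ⟩ := mem_iUnion₂.mp hxU
        have h1 : cAb C x = c' := blk_cAb hCu (hI hc'I) (hQblk c' hc'I hxQ)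
        have h2 : cAb C x = cμ := blk_cAb hCu hcμC hxblk
        rw [h1.symm.trans h2] at hc'I hxQ
        exact ⟨hc'I, hxQ⟩
    obtain ⟨x0, hx0M, hx0I⟩ := hμ y hy
    have hcμI : cμ ∈ I := (hclaim x0 hx0M hx0I).1
    have : μ ∈ Q cμ := by
      apply mem_of_closed_lim (hQcl cμ hcμI) ⟨y, hy⟩
      intro y' hy'
      obtain ⟨z, hzM, hzI⟩ := hμ (max y y') (max_lt hy hy')
      have hz1 : z ∈ Set.Ioo y μ := ⟨lt_of_le_of_lt (le_max_left _ _) hzI.1, hzI.2⟩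
      exact ⟨z, (hclaim z hzM hz1).2, lt_of_le_of_lt (le_max_right _ _) hzI.1, hzI.2⟩
    exact Or.inr (mem_iUnion₂.mpr ⟨cμ, hcμI, this⟩)
  · push_neg at hA
    -- hA : ∀ y, y < μ → ∃ x, x ∈ M ∧ x ∈ Set.Ioo y μ ∧ x ∉ blk C cμ
    have hμC : μ ∈ C := by
      apply mem_of_closed_lim hCcl hb
      intro y hy
      obtain ⟨x, hxM, hxI, hxnb⟩ := hA y hy
      have : ∃ d ∈ C, x ≤ d ∧ d < μ := by
        by_contra hno; push_neg at hno
        apply hxnb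
        refine ⟨hxI.2.le.trans hμcμ, fun d hd hdlt => ?_⟩
        by_contra hge; push_neg at hge
        exact absurd hdlt (not_lt.mpr (cAb_min hCu hd (hno d hd hge)))
      obtain ⟨d, hd, hxd, hdμ⟩ := this
      exact ⟨d, hd, lt_of_lt_of_le hxI.1 hxd, hdμ⟩
    have hcμμ : cμ = μ := le_antisymm (cAb_min hCu hμC le_rfl) hμcμ
    have haux : ∀ x, x < μ → x ∉ blk C cμ → cAb C x < μ := by
      intro x hxμ hxnb
      have h1 : cAb C x ≤ μ := cAb_min hCu hμC hxμ.le
      rcases lt_or_eq_of_le h1 with h | h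
      · exact h
      · exfalso
        apply hxnb
        have hbb := cAb_blk hCu x
        rw [h, ← hcμμ] at hbb
        exact hbb
    have hμW : μ ∈ W := by
      apply mem_of_closed_lim hW hb
      intro y hy
      obtain ⟨x, hxM, hxI, hxnb⟩ := hA y hy
      rcases hxM with hxF | hxU
      · exact ⟨x, (hFsub hxF).1, hxI⟩
      · obtain ⟨c1, hc1I, hxQ⟩ := mem_iUnion₂.mp hxU
        have hxblk1 : x ∈ blk C c1 := hQblk c1 hc1I hxQ
        have hc1 : cAb C x = c1 := blk_cAb hCu (hI hc1I) hxblk1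
        have hc1μ : c1 < μ := hc1 ▸ haux x hxI.2 hxnb
        have hc1y : y < c1 := lt_of_lt_of_le hxI.1 (hc1 ▸ (cAb_mem hCu x).2)
        obtain ⟨x', hx'M, hx'I, hx'nb⟩ := hA c1 hc1μ
        rcases hx'M with hx'F | hx'U
        · exact ⟨x', (hFsub hx'F).1, lt_trans hc1y hx'I.1, hx'I.2⟩
        · obtain ⟨c2, hc2I, hx'Q⟩ := mem_iUnion₂.mp hx'U
          have hx'blk : x' ∈ blk C c2 := hQblk c2 hc2I hx'Q
          have hc2 : cAb C x' = c2 := blk_cAb hCu (hI hc2I) hx'blk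
          have hc2μ : c2 < μ := hc2 ▸ haux x' hx'I.2 hx'nb
          have hc1c2 : c1 < c2 := lt_of_lt_of_le hx'I.1 (hc2 ▸ (cAb_mem hCu x').2)
          obtain ⟨w, hwW, hwblk⟩ := hwit c2 hc2I
          have hcw : c1 < w := hwblk.2 c1 (hI hc1I) hc1c2
          exact ⟨w, hwW, lt_trans hc1y hcw, lt_of_le_of_lt hwblk.1 hc2μ⟩
    exact Or.inl (hWF ⟨hμW, hμC⟩)

end S16

namespace S16

/-! ### block decoder -/

structure DecP (X : Set O1) (d : ℕ → O1) (v : ℕ → ℕ → O1) : Prop where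
  cover : ∀ z ∈ closure X, z ∉ X → ∃ n, d n = z
  notX : ∀ n, d n ∉ X
  vlt : ∀ n k, v n k < d n
  vmono : ∀ n, Monotone (v n)
  vcof : ∀ n z, z < d n → ∃ k, z ≤ v n k

private def maxFold (e : ℕ → O1) : ℕ → O1
  | 0 => e 0
  | (m+1) => max (maxFold e m) (e (m+1))

lemma dec_exists (X : Set O1) (b : O1) (hXb : X ⊆ Set.Iic b) : ∃ d v, DecP X d v := by
  have hclb : closure X ⊆ Set.Iic b := closure_minimal hXb isClosed_Iic
  set Dp := (closure X \ X) ∪ {nxt b} with hDp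
  have hDpc : Dp.Countable := by
    apply Set.Countable.union _ (Set.countable_singleton _)
    exact (countable_Iic b).mono (fun z hz => hclb hz.1)
  have hDpne : Dp.Nonempty := ⟨nxt b, Or.inr rfl⟩
  obtain ⟨d, hd⟩ := hDpc.exists_eq_range hDpne
  have hdmem : ∀ n, d n ∈ Dp := fun n => hd ▸ Set.mem_range_self n
  have hdnotX : ∀ n, d n ∉ X := by
    intro n hmem
    rcases hdmem n with h | h
    · exact h.2 hmem
    · rw [Set.mem_singleton_iff] at h
      have h2 := hXb hmem
      rw [h] at h2
      exact absurd h2 (not_le.mpr (lt_nxt b))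
  have hdbelow : ∀ n, ∃ y, y < d n := by
    intro n
    rcases hdmem n with h | h
    · by_contra hno; push_neg at hno
      obtain ⟨z, hz1, hz2⟩ := mem_closure_iff.mp h.1 _ (isOpen_IicO (d n)) (Set.mem_Iic.mpr le_rfl)
      have : z = d n := le_antisymm hz1 (hno z)
      exact h.2 (this ▸ hz2)
    · rw [Set.mem_singleton_iff] at h
      exact ⟨b, h ▸ lt_nxt b⟩
  have hladd : ∀ n, ∃ e : ℕ → O1, Set.Iio (d n) = Set.range e := by
    intro n
    obtain ⟨y, hy⟩ := hdbelow n
    exact (countable_Iio (d n)).exists_eq_range ⟨y, hy⟩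
  choose e he using hladd
  set v : ℕ → ℕ → O1 := fun n => maxFold (e n) with hv
  have hemem : ∀ n j, e n j < d n := fun n j => by
    have : e n j ∈ Set.Iio (d n) := (he n) ▸ Set.mem_range_self j
    exact this
  have hvlt : ∀ n k, v n k < d n := by
    intro n k
    induction k with
    | zero => exact hemem n 0
    | succ m ih => exact max_lt ih (hemem n (m+1))
  have hvmono : ∀ n, Monotone (v n) := fun n =>
    monotone_nat_of_le_succ (fun m => le_max_left _ _)
  have hvcof : ∀ n z, z < d n → ∃ k, z ≤ v n k := by
    intro n z hz
    have hzr : z ∈ Set.range (e n) := (he n) ▸ (Set.mem_Iio.mpr hz)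
    obtain ⟨j, hj⟩ := hzr
    have hup : ∀ j, e n j ≤ v n j := by
      intro j
      cases j with
      | zero => exact le_rfl
      | succ m => exact le_max_right _ _
    exact ⟨j, hj ▸ hup j⟩
  refine ⟨d, v, ⟨?_, hdnotX, hvlt, hvmono, hvcof⟩⟩
  intro z hz1 hz2
  have : z ∈ Dp := Or.inl ⟨hz1, hz2⟩
  rw [hd] at this
  exact this

noncomputable def psiD (d : ℕ → O1) (v : ℕ → ℕ → O1) (L : Set O1) (n : ℕ) : ℕ :=
  sInf {k | L ∩ Set.Ioc (v n k) (d n) = ∅}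

def MbD (X : Set O1) (d : ℕ → O1) (v : ℕ → ℕ → O1) (f : ℕ → ℕ) : Set O1 :=
  closure X \ ⋃ n, Set.Ioc (v n (f n)) (d n)

section dec

variable {X : Set O1} {d : ℕ → O1} {v : ℕ → ℕ → O1}

lemma psiD_nonempty (hd : DecP X d v) {L : Set O1} (hLX : L ⊆ X) (hLc : IsCompact L) (n : ℕ) :
    {k | L ∩ Set.Ioc (v n k) (d n) = ∅}.Nonempty := by
  rcases (L ∩ Set.Iic (d n)).eq_empty_or_nonempty with he | hne
  · refine ⟨0, Set.eq_empty_iff_forall_notMem.mpr fun z hz => ?_⟩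
    have hz2 : z ∈ L ∩ Set.Iic (d n) := ⟨hz.1, hz.2.2⟩
    rw [he] at hz2
    exact hz2
  · have hcpt : IsCompact (L ∩ Set.Iic (d n)) := hLc.inter_right isClosed_Iic
    obtain ⟨m, hm⟩ := hcpt.exists_isGreatest hne
    have hmL : m ∈ L := hm.1.1
    have hmne : m ≠ d n := fun h => hd.notX n (h ▸ hLX hmL)
    obtain ⟨k, hk⟩ := hd.vcof n m (lt_of_le_of_ne hm.1.2 hmne)
    refine ⟨k, Set.eq_empty_iff_forall_notMem.mpr fun z hz => ?_⟩
    have hzle : z ≤ m := hm.2 ⟨hz.1, hz.2.2⟩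
    exact absurd hz.2.1 (not_lt.mpr (hzle.trans hk))

lemma psiD_spec (hd : DecP X d v) {L : Set O1} (hLX : L ⊆ X) (hLc : IsCompact L) :
    ∀ n k, psiD d v L n ≤ k → L ∩ Set.Ioc (v n k) (d n) = ∅ := by
  intro n k hk
  have hmem : L ∩ Set.Ioc (v n (psiD d v L n)) (d n) = ∅ :=
    Nat.sInf_mem (psiD_nonempty hd hLX hLc n)
  refine Set.eq_empty_iff_forall_notMem.mpr fun z hz => ?_
  have : z ∈ L ∩ Set.Ioc (v n (psiD d v L n)) (d n) :=
    ⟨hz.1, lt_of_le_of_lt (hd.vmono n hk) hz.2.1, hz.2.2⟩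
  rw [hmem] at this
  exact this

lemma MbD_subX (hd : DecP X d v) (f : ℕ → ℕ) : MbD X d v f ⊆ X := by
  intro z hz
  by_contra hzX
  obtain ⟨n, hn⟩ := hd.cover z hz.1 hzX
  apply hz.2
  apply Set.mem_iUnion.mpr
  refine ⟨n, ?_⟩
  have h1 : v n (f n) < z := hn ▸ hd.vlt n (f n)
  exact ⟨h1, hn.ge⟩

lemma MbD_closed (X : Set O1) (d : ℕ → O1) (v : ℕ → ℕ → O1) (f : ℕ → ℕ) :
    IsClosed (MbD X d v f) :=
  IsClosed.sdiff isClosed_closure (isOpen_iUnion (fun n => isOpen_IocO _ _))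

lemma MbD_mem (hd : DecP X d v) {L : Set O1} (hLX : L ⊆ X) (hLc : IsCompact L) {f : ℕ → ℕ}
    (hf : ∀ n, psiD d v L n ≤ f n) : L ⊆ MbD X d v f := by
  intro z hz
  refine ⟨subset_closure (hLX hz), fun hmem => ?_⟩
  obtain ⟨n, hn⟩ := Set.mem_iUnion.mp hmem
  have h := psiD_spec hd hLX hLc n (f n) (hf n)
  have : z ∈ L ∩ Set.Ioc (v n (f n)) (d n) := ⟨hz, hn⟩
  rw [h] at this
  exact this

lemma MbD_sub_Iic {b : O1} (hXb : X ⊆ Set.Iic b) (f : ℕ → ℕ) : MbD X d v f ⊆ Set.Iic b :=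
  fun z hz => closure_minimal hXb isClosed_Iic hz.1

end dec

end S16

namespace S16

/-! ### gadgets -/

structure GadP (S C : Set O1) (c : O1) (lam : O1) (del : ℕ → O1) (a : ℕ → ℕ → O1) : Prop where
  lamS : lam ∈ S
  lamblk : lam ∈ blk C c
  lamlt : lam < c
  delS : ∀ n, del n ∉ S
  delmono : ∀ n, del n < del (n + 1)
  dellam : ∀ n, del n < lam
  delcof : ∀ z, z < lam → ∃ n, z < del n
  aS : ∀ n k, a n k ∈ S
  ablk : ∀ n k, a n k ∈ blk C c
  adel : ∀ n k, a n k < del n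
  alo : ∀ n k, del n < a (n + 1) k
  amono : ∀ n k, a n k < a n (k + 1)
  acof : ∀ n z, z < del n → ∃ k, z < a n k

lemma gad_exists {S C : Set O1} {c : O1} (hc : c ∈ C)
    (hCG : ∀ y, y < c → ((S ∩ limO (closure S \ S)) ∩ Set.Ioo y c).Nonempty)
    (hP : ∃ x, x < c ∧ x ∈ blk C c) :
    ∃ lam del a, GadP S C c lam del a := by
  obtain ⟨x, hxc, hxblk⟩ := hP
  obtain ⟨lam, ⟨hlamS, hlamlim⟩, hxlam, hlamc⟩ := hCG x hxc
  have hlamblk : lam ∈ blk C c := ⟨hlamc.le, fun d hd hdc => lt_trans (hxblk.2 d hd hdc) hxlam⟩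
  -- the δ sequence
  obtain ⟨del, hdelA, hdelx, hdellam, hdelmono, hdelcof⟩ :=
    seqBuild hxlam (fun z hz => hlamlim.2 z hz)
  -- the a sequences
  have hablder : ∀ n, ∀ z, z < del n → (S ∩ Set.Ioo z (del n)).Nonempty := by
    intro n z hz
    exact closure_lim (hdelA n).1 (hdelA n).2 z hz
  have haex : ∀ n, ∃ u : ℕ → O1,
      (∀ k, u k ∈ S) ∧ (∀ k, (if n = 0 then x else del (n-1)) < u k) ∧ (∀ k, u k < del n) ∧
      (∀ k, u k < u (k + 1)) ∧ (∀ z, z < del n → ∃ k, z < u k) := by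
    intro n
    cases n with
    | zero => exact seqBuild (hdelx 0) (hablder 0)
    | succ m =>
      have h1 : del m < del (m+1) := hdelmono m
      have := seqBuild h1 (hablder (m+1))
      simpa using this
  choose a haS halo hadel hamono hacof using haex
  have halo' : ∀ n k, del n < a (n+1) k := by
    intro n k
    have := halo (n+1) k
    simpa using this
  have hax : ∀ n k, x < a n k := by
    intro n k
    cases n with
    | zero => have := halo 0 k; simpa using this
    | succ m => exact lt_trans (hdelx m) (halo' m k)
  refine ⟨lam, del, a, ⟨hlamS, hlamblk, hlamc, fun n => (hdelA n).2, hdelmono,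
    hdellam, hdelcof, haS, ?_, hadel, halo', hamono, hacof⟩⟩
  intro n k
  refine ⟨le_of_lt (lt_trans (lt_trans (hadel n k) (hdellam n)) hlamc), fun d hd hdc => ?_⟩
  exact lt_trans (hxblk.2 d hd hdc) (hax n k)

end S16

namespace S16

/-! ### the coding set attached to a gadget -/

def gadSet (lam : O1) (a : ℕ → ℕ → O1) (f : ℕ → ℕ) : Set O1 :=
  {lam} ∪ {p | ∃ n k, k < f n ∧ p = a n k}

lemma lam_mem_gadSet (lam : O1) (a : ℕ → ℕ → O1) (f : ℕ → ℕ) : lam ∈ gadSet lam a f :=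
  Or.inl rfl

section gad

variable {S C : Set O1} {c lam : O1} {del : ℕ → O1} {a : ℕ → ℕ → O1}

lemma gadSet_subS (hg : GadP S C c lam del a) (f : ℕ → ℕ) : gadSet lam a f ⊆ S := by
  rintro z (rfl | ⟨n, k, _, rfl⟩)
  · exact hg.lamS
  · exact hg.aS n k

lemma gadSet_blk (hg : GadP S C c lam del a) (f : ℕ → ℕ) : gadSet lam a f ⊆ blk C c := by
  rintro z (rfl | ⟨n, k, _, rfl⟩)
  · exact hg.lamblk
  · exact hg.ablk n k

lemma gadSet_le_lam (hg : GadP S C c lam del a) (f : ℕ → ℕ) :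
    gadSet lam a f ⊆ Set.Iic lam := by
  rintro z (rfl | ⟨n, k, _, rfl⟩)
  · exact Set.self_mem_Iic
  · exact (lt_trans (hg.adel n k) (hg.dellam n)).le

lemma gadSet_closed (hg : GadP S C c lam del a) (f : ℕ → ℕ) : IsClosed (gadSet lam a f) := by
  have hdelmono : ∀ {i j : ℕ}, i ≤ j → del i ≤ del j :=
    fun h => (strictMono_nat_of_lt_succ hg.delmono).monotone h
  classical
  apply isClosed_of_limits
  intro μ hb hμ
  rcases lt_trichotomy μ lam with hlt | heq | hgt
  · exfalso
    obtain ⟨n0, hn0⟩ := hg.delcof μ hlt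
    have hQne : {n | μ ≤ del n}.Nonempty := ⟨n0, hn0.le⟩
    set m := sInf {n | μ ≤ del n} with hm
    have hmmem : μ ≤ del m := Nat.sInf_mem hQne
    have hmlt : ∀ j, j < m → del j < μ := by
      intro j hj
      by_contra h; push_neg at h
      exact absurd (Nat.sInf_le (h : j ∈ {n | μ ≤ del n})) (not_le.mpr hj)
    obtain ⟨y0, hy0⟩ := hb
    set dl : O1 := if 0 < m then del (m - 1) else y0 with hdl
    have hdlμ : dl < μ := by
      rw [hdl]
      by_cases h0 : 0 < m
      · rw [if_pos h0]; exact hmlt _ (Nat.sub_lt h0 Nat.one_pos)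
      · rw [if_neg h0]; exact hy0
    set Fs : Finset O1 := ((Finset.range (f m)).image (a m)).filter (· < μ) with hFs
    set W : Finset O1 := insert y0 (insert dl Fs) with hW
    have hWne : W.Nonempty := ⟨y0, Finset.mem_insert_self _ _⟩
    set w := W.max' hWne with hw
    have hwlt : w < μ := by
      rw [hw, Finset.max'_lt_iff]
      intro z hz
      rcases Finset.mem_insert.mp hz with rfl | hz
      · exact hy0
      rcases Finset.mem_insert.mp hz with rfl | hz
      · exact hdlμ
      · exact (Finset.mem_filter.mp hz).2
    obtain ⟨z, hzg, hz1, hz2⟩ := hμ w hwlt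
    rcases hzg with rfl | ⟨n, k, hk, rfl⟩
    · exact absurd hz2 (not_lt.mpr hlt.le)
    · rcases lt_trichotomy n m with h1 | rfl | h3
      · have h0m : 0 < m := Nat.pos_of_ne_zero (fun h => by omega)  -- n < m
        have hd1 : a n k < del (m - 1) := lt_of_lt_of_le (hg.adel n k) (hdelmono (show n ≤ m - 1 by omega))
        have hd2 : dl = del (m-1) := by rw [hdl, if_pos h0m]
        have : a n k ≤ w := le_trans (le_of_lt (hd2 ▸ hd1))
          (Finset.le_max' W dl (Finset.mem_insert_of_mem (Finset.mem_insert_self _ _)))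
        exact absurd hz1 (not_lt.mpr this)
      · have hmem : a m k ∈ Fs := Finset.mem_filter.mpr
          ⟨Finset.mem_image.mpr ⟨k, Finset.mem_range.mpr hk, rfl⟩, hz2⟩
        have : a m k ≤ w := Finset.le_max' W _
          (Finset.mem_insert_of_mem (Finset.mem_insert_of_mem hmem))
        exact absurd hz1 (not_lt.mpr this)
      · have hn0 : 0 < n := lt_of_le_of_lt (Nat.zero_le m) h3
        have heq2 : (n - 1) + 1 = n := Nat.succ_pred_eq_of_pos hn0
        have hlo : del (n - 1) < a n k := by
          have := hg.alo (n-1) k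
          rwa [heq2] at this
        have : μ ≤ del (n - 1) := le_trans hmmem (hdelmono (show m ≤ n - 1 by omega))
        exact absurd hz2 (not_lt.mpr (le_of_lt (lt_of_le_of_lt this hlo)))
  · exact heq ▸ lam_mem_gadSet lam a f
  · exfalso
    obtain ⟨z, hzg, hz1, _⟩ := hμ lam hgt
    rcases hzg with rfl | ⟨n, k, _, rfl⟩
    · exact lt_irrefl _ hz1
    · exact absurd hz1 (not_lt.mpr (lt_trans (hg.adel n k) (hg.dellam n)).le)

lemma gad_bddAbove (hg : GadP S C c lam del a) {K : Set O1} (hKcl : IsClosed K) (hKS : K ⊆ S)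
    (n : ℕ) : BddAbove {m | ∃ k, m = k + 1 ∧ a n k ∈ K} := by
  by_contra h
  rw [not_bddAbove_iff] at h
  have hKd : del n ∈ K := by
    apply mem_of_closed_lim hKcl ⟨a n 0, hg.adel n 0⟩
    intro y hy
    obtain ⟨k0, hk0⟩ := hg.acof n y hy
    obtain ⟨m, hm, hm2⟩ := h k0
    obtain ⟨k, rfl, hkK⟩ := hm
    have hkk0 : k0 ≤ k := by omega
    have hmono : a n k0 ≤ a n k := (strictMono_nat_of_lt_succ (hg.amono n)).monotone hkk0
    exact ⟨a n k, hkK, lt_of_lt_of_le hk0 hmono, hg.adel n k⟩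
  exact hg.delS n (hKS hKd)

end gad

end S16

namespace S16

/-! ### the full coding context -/

structure Ctx (S T : Set O1) where
  C : Set O1
  hCcl : IsClosed C
  hCu : ∀ z : O1, (C ∩ Set.Ici z).Nonempty
  hCS : ∀ c ∈ C, (c ∈ S ↔ c ∈ T)
  gLam : O1 → O1
  gDel : O1 → ℕ → O1
  gA : O1 → ℕ → ℕ → O1
  hGad : ∀ c ∈ C, (∃ x, x < c ∧ x ∈ blk C c) → GadP S C c (gLam c) (gDel c) (gA c)
  dD : O1 → ℕ → O1
  dV : O1 → ℕ → ℕ → O1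
  hDec : ∀ c, DecP (T ∩ blk C c) (dD c) (dV c)

lemma ctx_exists {S T : Set O1} (h1 : ¬ BddO1 (closure S \ S)) (h2 : IsStat S)
    (h3 : ¬ IsStat (symmDiff S T)) : Nonempty (Ctx S T) := by
  classical
  unfold IsStat at h3; push_neg at h3
  obtain ⟨C0, hC0cub, hC0⟩ := h3
  have hC0e : symmDiff S T ∩ C0 = ∅ := by
    first
      | exact hC0
      | exact Set.not_nonempty_iff_eq_empty.mp hC0
  clear hC0
  have hGu : ∀ β, ∃ x ∈ S ∩ limO (closure S \ S), β < x := by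
    intro β
    have hLcl : IsClosed (limO (closure S \ S) ∩ Set.Ici (nxt β)) :=
      (limO_closed _).inter isClosed_Ici
    have hLunb : ∀ γ, ∃ a ∈ limO (closure S \ S) ∩ Set.Ici (nxt β), γ < a := by
      intro γ
      obtain ⟨x, hx1, hx2⟩ := limO_unbdd (unbdd_iff.mp h1) (max γ (nxt β))
      exact ⟨x, ⟨hx1, le_of_lt (lt_of_le_of_lt (le_max_right _ _) hx2)⟩,
        lt_of_le_of_lt (le_max_left _ _) hx2⟩
    obtain ⟨x, hx⟩ := h2 _ ⟨hLcl, unbdd_iff.mpr hLunb⟩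
    exact ⟨x, ⟨hx.1, hx.2.1⟩, lt_of_lt_of_le (lt_nxt β) hx.2.2⟩
  have hCunb : ∀ β, ∃ c ∈ C0 ∩ limO (S ∩ limO (closure S \ S)), β < c :=
    cub_unbdd_inter hC0cub.1 (unbdd_iff.mp hC0cub.2) (limO_closed _) (limO_unbdd hGu)
  set C := C0 ∩ limO (S ∩ limO (closure S \ S)) with hCdef
  have hCcl : IsClosed C := hC0cub.1.inter (limO_closed _)
  have hCu : ∀ z : O1, (C ∩ Set.Ici z).Nonempty := by
    intro z; obtain ⟨c, hc1, hc2⟩ := hCunb z; exact ⟨c, hc1, hc2.le⟩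
  have hCS : ∀ c ∈ C, (c ∈ S ↔ c ∈ T) := by
    intro c hc
    constructor
    · intro hcS; by_contra hcT
      have hmem : c ∈ symmDiff S T ∩ C0 := ⟨Set.mem_symmDiff.mpr (Or.inl ⟨hcS, hcT⟩), hc.1⟩
      rw [hC0e] at hmem; exact hmem
    · intro hcT; by_contra hcS
      have hmem : c ∈ symmDiff S T ∩ C0 := ⟨Set.mem_symmDiff.mpr (Or.inr ⟨hcT, hcS⟩), hc.1⟩
      rw [hC0e] at hmem; exact hmem
  have hgadex : ∀ c : O1, ∃ lam del a,
      (c ∈ C ∧ (∃ x, x < c ∧ x ∈ blk C c)) → GadP S C c lam del a := by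
    intro c
    by_cases h : c ∈ C ∧ (∃ x, x < c ∧ x ∈ blk C c)
    · obtain ⟨lam, del, a, hg⟩ := gad_exists h.1 (fun y hy => (h.1.2).2 y hy) h.2
      exact ⟨lam, del, a, fun _ => hg⟩
    · exact ⟨Classical.arbitrary O1, fun _ => Classical.arbitrary O1,
        fun _ _ => Classical.arbitrary O1, fun hc => absurd hc h⟩
  choose gLam gDel gA hGad using hgadex
  have hdecex : ∀ c : O1, ∃ d v, DecP (T ∩ blk C c) d v := by
    intro c
    exact dec_exists _ c (fun z hz => hz.2.1)
  choose dD dV hDec using hdecex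
  exact ⟨⟨C, hCcl, hCu, hCS, gLam, gDel, gA, (fun c hc hex => hGad c ⟨hc, hex⟩), dD, dV, hDec⟩⟩

variable {S T : Set O1}

open Classical in
noncomputable def Ctx.code (X : Ctx S T) (L : Set O1) (c : O1) : Set O1 :=
  if (L ∩ blk X.C c ∩ Set.Iio c).Nonempty then
    gadSet (X.gLam c) (X.gA c) (psiD (X.dD c) (X.dV c) (L ∩ blk X.C c))
  else ∅

noncomputable def Ctx.g (X : Ctx S T) (L : Set O1) : Set O1 :=
  (L ∩ X.C) ∪ ⋃ c ∈ X.C, X.code L c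

lemma hex_of_cond {X : Ctx S T} {L : Set O1} {c : O1}
    (h : (L ∩ blk X.C c ∩ Set.Iio c).Nonempty) : ∃ x, x < c ∧ x ∈ blk X.C c := by
  obtain ⟨z, hz⟩ := h
  exact ⟨z, hz.2, hz.1.2⟩

lemma Ctx.g_subS (X : Ctx S T) {L : Set O1} (hLT : L ⊆ T) : X.g L ⊆ S := by
  rintro z (⟨hzL, hzC⟩ | hz)
  · exact (X.hCS _ hzC).mpr (hLT hzL)
  · obtain ⟨c, hcC, hzc⟩ := mem_iUnion₂.mp hz
    rw [Ctx.code] at hzc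
    split_ifs at hzc with hcond
    · exact gadSet_subS (X.hGad c hcC (hex_of_cond hcond)) _ hzc
    · exact absurd hzc (Set.notMem_empty z)

lemma Ctx.g_bdd (X : Ctx S T) {L : Set O1} (hLc : IsCompact L) : BddO1 (X.g L) := by
  obtain ⟨β, hβ⟩ := bdd_of_compact hLc
  refine ⟨cAb X.C β, ?_⟩
  rintro z (⟨hzL, _⟩ | hz)
  · exact le_trans (hβ z hzL) (le_trans (cAb_mem X.hCu β).2 le_rfl)
  · obtain ⟨c, hcC, hzc⟩ := mem_iUnion₂.mp hz
    rw [Ctx.code] at hzc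
    split_ifs at hzc with hcond
    · obtain ⟨x, hx⟩ := hcond
      have hxβ : x ≤ β := hβ x hx.1.1
      have hcx : cAb X.C x = c := blk_cAb X.hCu hcC hx.1.2
      have hcle : c ≤ cAb X.C β := hcx ▸ cAb_mono X.hCu hxβ
      have hzblk := gadSet_blk (X.hGad c hcC (hex_of_cond ⟨x, hx⟩)) _ hzc
      exact le_trans hzblk.1 hcle
    · exact absurd hzc (Set.notMem_empty z)

lemma Ctx.g_closed (X : Ctx S T) {L : Set O1} (hLT : L ⊆ T) (hLc : IsCompact L) :
    IsClosed (X.g L) := by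
  classical
  have hrw : X.g L = (L ∩ X.C) ∪ ⋃ c ∈ {c | c ∈ X.C ∧ (L ∩ blk X.C c ∩ Set.Iio c).Nonempty},
      gadSet (X.gLam c) (X.gA c) (psiD (X.dD c) (X.dV c) (L ∩ blk X.C c)) := by
    unfold Ctx.g
    congr 1
    ext z
    constructor
    · intro hz
      obtain ⟨c, hcC, hzc⟩ := mem_iUnion₂.mp hz
      rw [Ctx.code] at hzc
      split_ifs at hzc with hcond
      · exact mem_iUnion₂.mpr ⟨c, ⟨hcC, hcond⟩, hzc⟩
      · exact absurd hzc (Set.notMem_empty z)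
    · intro hz
      obtain ⟨c, hcI, hzc⟩ := mem_iUnion₂.mp hz
      refine mem_iUnion₂.mpr ⟨c, hcI.1, ?_⟩
      rw [Ctx.code, if_pos hcI.2]
      exact hzc
  rw [hrw]
  apply unionClosed X.hCcl X.hCu L (L ∩ X.C) hLc.isClosed (hLc.isClosed.inter X.hCcl)
    (fun z hz => hz) (fun z hz => hz) _ (fun c hc => hc.1) _
    (fun c hc => gadSet_closed (X.hGad c hc.1 (hex_of_cond hc.2)) _)
    (fun c hc => gadSet_blk (X.hGad c hc.1 (hex_of_cond hc.2)) _)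
    (fun c hc => by obtain ⟨x, hx⟩ := hc.2; exact ⟨x, hx.1.1, hx.1.2⟩)

lemma Ctx.g_compact (X : Ctx S T) {L : Set O1} (hLT : L ⊆ T) (hLc : IsCompact L) :
    IsCompact (X.g L) :=
  compact_of_closed_bdd (X.g_closed hLT hLc) (X.g_bdd hLc)

lemma Ctx.bound (X : Ctx S T) {K : Set O1} (hKS : K ⊆ S) (hKc : IsCompact K) :
    ∃ M, M ⊆ T ∧ IsCompact M ∧ ∀ L, L ⊆ T → IsCompact L → X.g L ⊆ K → L ⊆ M := by
  classical
  set A : Set O1 := {c | c ∈ X.C ∧ (∃ x, x < c ∧ x ∈ blk X.C c) ∧ X.gLam c ∈ K} with hA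
  set fK : O1 → ℕ → ℕ := fun c n => sSup {m | ∃ k, m = k + 1 ∧ X.gA c n k ∈ K} with hfK
  set M := (K ∩ X.C) ∪ ⋃ c ∈ A, MbD (T ∩ blk X.C c) (X.dD c) (X.dV c) (fK c) with hM
  have hgadA : ∀ c ∈ A, GadP S X.C c (X.gLam c) (X.gDel c) (X.gA c) :=
    fun c hc => X.hGad c hc.1 hc.2.1
  have hMT : M ⊆ T := by
    rintro z (⟨hzK, hzC⟩ | hz)
    · exact (X.hCS z hzC).mp (hKS hzK)
    · obtain ⟨c, hcA, hzc⟩ := mem_iUnion₂.mp hz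
      exact (MbD_subX (X.hDec c) _ hzc).1
  have hMcl : IsClosed M := by
    rw [hM]
    apply unionClosed X.hCcl X.hCu K (K ∩ X.C) hKc.isClosed (hKc.isClosed.inter X.hCcl)
      (fun z hz => hz) (fun z hz => hz) A (fun c hc => hc.1) _
      (fun c _ => MbD_closed _ _ _ _)
      (fun c hc => fun z hz => (MbD_subX (X.hDec c) _ hz).2)
      (fun c hc => ⟨X.gLam c, hc.2.2, (hgadA c hc).lamblk⟩)
  have hMbdd : BddO1 M := by
    obtain ⟨β, hβ⟩ := bdd_of_compact hKc
    refine ⟨cAb X.C β, ?_⟩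
    rintro z (⟨hzK, _⟩ | hz)
    · exact le_trans (hβ z hzK) (cAb_mem X.hCu β).2
    · obtain ⟨c, hcA, hzc⟩ := mem_iUnion₂.mp hz
      have h1 : X.gLam c ≤ β := hβ _ hcA.2.2
      have h2 : cAb X.C (X.gLam c) = c := blk_cAb X.hCu hcA.1 (hgadA c hcA).lamblk
      have h3 : c ≤ cAb X.C β := h2 ▸ cAb_mono X.hCu h1
      have h4 : z ∈ blk X.C c := (MbD_subX (X.hDec c) _ hzc).2
      exact le_trans h4.1 h3
  refine ⟨M, hMT, compact_of_closed_bdd hMcl hMbdd, ?_⟩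
  intro L hLT hLc hgK z hzL
  by_cases hzC : z ∈ X.C
  · exact Or.inl ⟨hgK (Or.inl ⟨hzL, hzC⟩), hzC⟩
  · have hcC : cAb X.C z ∈ X.C := (cAb_mem X.hCu z).1
    set c := cAb X.C z with hc
    have hzlec : z ≤ c := (cAb_mem X.hCu z).2
    have hzlt : z < c := lt_of_le_of_ne hzlec (fun h => hzC (h ▸ hcC))
    have hzblk : z ∈ blk X.C c := cAb_blk X.hCu z
    have hcond : (L ∩ blk X.C c ∩ Set.Iio c).Nonempty := ⟨z, ⟨hzL, hzblk⟩, hzlt⟩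
    have hcodeK : gadSet (X.gLam c) (X.gA c)
        (psiD (X.dD c) (X.dV c) (L ∩ blk X.C c)) ⊆ K := by
      intro w hw
      apply hgK
      refine Or.inr (mem_iUnion₂.mpr ⟨c, hcC, ?_⟩)
      rw [Ctx.code, if_pos hcond]
      exact hw
    have hgad : GadP S X.C c (X.gLam c) (X.gDel c) (X.gA c) :=
      X.hGad c hcC (hex_of_cond hcond)
    have hcA : c ∈ A := ⟨hcC, hex_of_cond hcond, hcodeK (lam_mem_gadSet _ _ _)⟩
    have hLblkX : L ∩ blk X.C c ⊆ T ∩ blk X.C c := fun w hw => ⟨hLT hw.1, hw.2⟩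
    have hLblkc : IsCompact (L ∩ blk X.C c) := hLc.inter_right (blk_closed c)
    have hpsile : ∀ n, psiD (X.dD c) (X.dV c) (L ∩ blk X.C c) n ≤ fK c n := by
      intro n
      cases hp : psiD (X.dD c) (X.dV c) (L ∩ blk X.C c) n with
      | zero => exact Nat.zero_le _
      | succ k =>
        have hmem : X.gA c n k ∈ K :=
          hcodeK (Or.inr ⟨n, k, by rw [hp]; exact Nat.lt_succ_self k, rfl⟩)
        have hin : k + 1 ∈ {m | ∃ k', m = k' + 1 ∧ X.gA c n k' ∈ K} := ⟨k, rfl, hmem⟩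
        have := le_csSup (gad_bddAbove hgad hKc.isClosed hKS n) hin
        rw [hfK]
        exact this
    have hsubM := MbD_mem (X.hDec c) hLblkX hLblkc hpsile
    exact Or.inr (mem_iUnion₂.mpr ⟨c, hcA, hsubM ⟨hzL, hzblk⟩⟩)

end S16


/-- If `S, T ⊆ ω₁`, `cl(S) \ S` is unbounded in `ω₁`, `S` is stationary and the symmetric
difference `S Δ T` is non-stationary, then `K(S) ≥_T K(T)`. -/
theorem statement16 (S T : Set O1)
    (h1 : ¬ BddO1 (closure S \ S))
    (h2 : IsStat S) (h3 : ¬ IsStat (symmDiff S T)) :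
    TukeyGE (KS S) (KS T) := by
  obtain ⟨X⟩ := S16.ctx_exists h1 h2 h3
  have hg : ∀ L : KS T, (X.g L.1 ⊆ S ∧ IsCompact (X.g L.1)) := fun L =>
    ⟨X.g_subS L.2.1, X.g_compact L.2.1 L.2.2⟩
  have hbnd : ∀ K : KS S, ∃ M : KS T, ∀ L : KS T,
      (⟨X.g L.1, hg L⟩ : KS S) ≤ K → L ≤ M := by
    intro K
    obtain ⟨M, hMT, hMc, hM⟩ := X.bound K.2.1 K.2.2
    refine ⟨⟨M, hMT, hMc⟩, ?_⟩
    intro L hL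
    exact hM L.1 L.2.1 L.2.2 hL
  choose φ hφ using hbnd
  refine ⟨φ, ?_⟩
  intro Cs hCs q _
  obtain ⟨c, hcC, hc⟩ := hCs (⟨X.g q.1, hg q⟩ : KS S) (Set.mem_univ _)
  exact ⟨φ c, ⟨c, hcC, rfl⟩, hφ c q hc⟩
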